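/- arXiv:1402.0471 — 2 statements merged into one kernel-verified Lean document; each statement's English description precedes it below -/
import Mathlib

section
/- Let G = (V, A) be a finite directed graph in which every vertex has at most one outgoing arc lying on a directed cycle. Then every strongly connected component of G containing at least one arc of G between two of its vertices is a single directed cycle: its vertices can be enumerated as x_0, x_1, ..., x_{k-1} (all distinct) such that the arcs of G joining two vertices of the component are exactly the arcs (x_i, x_{i+1 mod k}) for 0 ≤ i < k. -/
/-- Finite directed graph `(V, A)` in which every vertex has at most one outgoing arc
lying on a directed cycle (an arc `(u, y)` lies on a directed cycle iff `A u y` and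
there is a directed walk from `y` back to `u`).  Let `C` be the strongly connected
component of a vertex `v` (the set of `u` mutually reachable from `v` by directed
walks), and suppose `C` contains an arc of `G` between two of its vertices.  Then the
vertices of `C` can be enumerated, injectively and exhaustively, as `f 0, …, f (k-1)`
indexed by `ZMod k` with `k ≥ 1`, in such a way that the arcs of `G` joining two
vertices of `C` are exactly the arcs `(f i, f (i+1))` (indices mod `k`). -/
theorem stmt_2 {V : Type*} [Fintype V] (A : V → V → Prop)
    (h : ∀ u : V, {y | A u y ∧ Relation.ReflTransGen A y u}.Subsingleton)
    (v : V) (C : Set V)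
    (hC : C = {u | Relation.ReflTransGen A u v ∧ Relation.ReflTransGen A v u})
    (harc : ∃ a ∈ C, ∃ b ∈ C, A a b) :
    ∃ k : ℕ, 0 < k ∧ ∃ f : ZMod k → V, Function.Injective f ∧ Set.range f = C ∧
      ∀ a b : V, (a ∈ C ∧ b ∈ C ∧ A a b) ↔ ∃ i : ZMod k, f i = a ∧ f (i + 1) = b := by
  classical
  have hmemC : ∀ u, u ∈ C ↔ Relation.ReflTransGen A u v ∧ Relation.ReflTransGen A v u := by
    simp [hC, Set.mem_setOf_eq]
  have hvC : v ∈ C := (hmemC v).2 ⟨.refl, .refl⟩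
  obtain ⟨a, haC, b, hbC, hab⟩ := harc
  -- every vertex of `C` has an outgoing arc lying on a cycle
  have hex : ∀ u ∈ C, ∃ z, A u z ∧ Relation.ReflTransGen A z u := by
    intro u hu
    obtain ⟨huv, hvu⟩ := (hmemC u).1 hu
    obtain ⟨hav, hva⟩ := (hmemC a).1 haC
    obtain ⟨hbv, hvb⟩ := (hmemC b).1 hbC
    have hua : Relation.ReflTransGen A u a := huv.trans hva
    have hbu : Relation.ReflTransGen A b u := hbv.trans hvu
    rcases hua.cases_head with h1 | ⟨z, hz, hza⟩
    · exact ⟨b, h1 ▸ hab, hbu⟩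
    · exact ⟨z, hz, hza.trans ((Relation.ReflTransGen.single hab).trans hbu)⟩
  set g : V → V := fun u => if h : ∃ z, A u z ∧ Relation.ReflTransGen A z u then h.choose else u
    with hgdef
  have hg : ∀ u ∈ C, A u (g u) ∧ Relation.ReflTransGen A (g u) u := by
    intro u hu
    have hx := hex u hu
    simp only [hgdef, dif_pos hx]
    exact hx.choose_spec
  have hgC : ∀ u ∈ C, g u ∈ C := by
    intro u hu
    obtain ⟨h1, h2⟩ := hg u hu
    obtain ⟨huv, hvu⟩ := (hmemC u).1 hu
    exact (hmemC _).2 ⟨h2.trans huv, hvu.tail h1⟩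
  have huniq : ∀ u ∈ C, ∀ z, A u z → Relation.ReflTransGen A z u → z = g u := by
    intro u hu z h1 h2
    exact h u ⟨h1, h2⟩ ⟨(hg u hu).1, (hg u hu).2⟩
  -- directed walks inside `C` follow `g`
  have hpath : ∀ w ∈ C, ∀ u, Relation.ReflTransGen A u w → u ∈ C → ∃ n, g^[n] u = w := by
    intro w hw u hr
    obtain ⟨hwv, _⟩ := (hmemC w).1 hw
    induction hr using Relation.ReflTransGen.head_induction_on with
    | refl => exact fun _ => ⟨0, rfl⟩
    | @head p q h' htail ih =>
      intro hpC
      have hqw : Relation.ReflTransGen A q w := htail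
      have hqp : Relation.ReflTransGen A q p :=
        (hqw.trans hwv).trans ((hmemC p).1 hpC).2
      have hqC : q ∈ C := (hmemC q).2 ⟨hqw.trans hwv, (((hmemC p).1 hpC).2).tail h'⟩
      have hq_eq : q = g p := huniq p hpC q h' hqp
      obtain ⟨n, hn⟩ := ih hqC
      exact ⟨n + 1, by rw [Function.iterate_succ_apply, ← hq_eq]; exact hn⟩
  -- `v` is a periodic point of `g`
  have hperiod : ∃ m, 0 < m ∧ g^[m] v = v := by
    obtain ⟨n, hn⟩ := hpath v hvC (g v) (hg v hvC).2 (hgC v hvC)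
    exact ⟨n + 1, Nat.succ_pos n, by rw [Function.iterate_succ_apply]; exact hn⟩
  obtain ⟨m, hm0, hmv⟩ := hperiod
  have hP : Function.IsPeriodicPt g m v := hmv
  set k := Function.minimalPeriod g v with hkdef
  have hk0 : 0 < k := hP.minimalPeriod_pos hm0
  haveI : NeZero k := ⟨hk0.ne'⟩
  have hiterC : ∀ n : ℕ, g^[n] v ∈ C := by
    intro n
    induction n with
    | zero => exact hvC
    | succ n ih => rw [Function.iterate_succ_apply']; exact hgC _ ih
  refine ⟨k, hk0, fun i => g^[i.val] v, ?_, ?_, ?_⟩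
  · intro i j hij
    have := Function.iterate_injOn_Iio_minimalPeriod
      (f := g) (x := v) (ZMod.val_lt i) (ZMod.val_lt j) hij
    exact ZMod.val_injective k this
  · ext u
    constructor
    · rintro ⟨i, rfl⟩
      exact hiterC _
    · intro hu
      obtain ⟨n, hn⟩ := hpath u hu v ((hmemC u).1 hu).2 hvC
      refine ⟨(n : ZMod k), ?_⟩
      show g^[(↑n : ZMod k).val] v = u
      rw [ZMod.val_natCast, Function.iterate_mod_minimalPeriod_eq]
      exact hn
  · intro x y
    have hfsucc : ∀ i : ZMod k, g^[(i + 1).val] v = g (g^[i.val] v) := by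
      intro i
      have : (i + 1 : ZMod k) = ((i.val + 1 : ℕ) : ZMod k) := by
        rw [Nat.cast_add, Nat.cast_one, ZMod.natCast_val, ZMod.cast_id]
      rw [this, ZMod.val_natCast, Function.iterate_mod_minimalPeriod_eq,
        Function.iterate_succ_apply']
    constructor
    · rintro ⟨hx, hy, hxy⟩
      have hyx : Relation.ReflTransGen A y x :=
        (((hmemC y).1 hy).1).trans ((hmemC x).1 hx).2
      have hy_eq : y = g x := huniq x hx y hxy hyx
      obtain ⟨n, hn⟩ := hpath x hx v ((hmemC x).1 hx).2 hvC
      refine ⟨(n : ZMod k), ?_, ?_⟩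
      · show g^[(↑n : ZMod k).val] v = x
        rw [ZMod.val_natCast, Function.iterate_mod_minimalPeriod_eq]; exact hn
      · show g^[((↑n : ZMod k) + 1).val] v = y
        rw [hfsucc, ZMod.val_natCast, Function.iterate_mod_minimalPeriod_eq, hn]
        exact hy_eq.symm
    · rintro ⟨i, rfl, rfl⟩
      have hx : g^[i.val] v ∈ C := hiterC _
      refine ⟨hx, ?_, ?_⟩
      · show g^[(i + 1).val] v ∈ C
        rw [hfsucc]; exact hgC _ hx
      · show A (g^[i.val] v) (g^[(i + 1).val] v)
        rw [hfsucc]; exact (hg _ hx).1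
end

section
/- Let n ≥ 1, let q be a positive integer, and let A be an n × n real matrix with zero diagonal whose entries all belong to {0, 1/2}, with at most two nonzero entries in each row, and such that I − A is invertible. Let b be a vector in ℚ^n each of whose entries is of the form c/(2q) for some integer c. Then every entry of the unique solution z of z = A z + b (that is, z = (I − A)^{-1} b) can be written as a fraction a/d of integers with 0 < d ≤ 6^{n/2} · q. -/
open Matrix Finset

lemma my_trace_eq_sum_eigenvalues {m : Type*} [Fintype m] [DecidableEq m]
    {P : Matrix m m ℝ} (hP : P.IsHermitian) :
    P.trace = ∑ i, hP.eigenvalues i := by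
  conv_lhs => rw [hP.spectral_theorem, Unitary.conjStarAlgAut_apply]
  rw [Matrix.trace_mul_cycle]
  have h1 : (star (hP.eigenvectorUnitary : Matrix m m ℝ)) *
      (hP.eigenvectorUnitary : Matrix m m ℝ) = 1 := by
    exact Matrix.mem_unitaryGroup_iff'.mp hP.eigenvectorUnitary.2
  rw [h1, Matrix.one_mul, Matrix.trace_diagonal]
  simp

lemma my_det_bound {n : ℕ} (hn : 1 ≤ n) (R : Matrix (Fin n) (Fin n) ℝ)
    (hrow : ∀ i, ∑ j, (R i j) ^ 2 ≤ 6) :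
    |R.det| ≤ Real.sqrt 6 ^ n := by
  set P : Matrix (Fin n) (Fin n) ℝ := R * Rᴴ with hPdef
  have hpsd : P.PosSemidef := Matrix.posSemidef_self_mul_conjTranspose R
  have hherm : P.IsHermitian := hpsd.1
  set lam : Fin n → ℝ := hherm.eigenvalues with hlam
  have hlamnn : ∀ i, 0 ≤ lam i := fun i => hpsd.eigenvalues_nonneg i
  have htr : P.trace = ∑ i, lam i := my_trace_eq_sum_eigenvalues hherm
  have htr6 : ∑ i, lam i ≤ 6 * n := by
    rw [← htr]
    have : P.trace = ∑ i, ∑ j, (R i j)^2 := by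
      simp only [Matrix.trace, Matrix.diag, hPdef, Matrix.mul_apply,
        Matrix.conjTranspose_apply, star_trivial, sq]
    rw [this]
    calc ∑ i : Fin n, ∑ j, (R i j)^2 ≤ ∑ _i : Fin n, (6:ℝ) :=
          Finset.sum_le_sum (fun i _ => hrow i)
      _ = 6 * n := by simp [mul_comm]
  have hdetP : P.det = ∏ i, lam i := by
    simpa using hherm.det_eq_prod_eigenvalues
  -- AM-GM
  have hnpos : (0:ℝ) < n := by exact_mod_cast hn
  have hamgm : ∏ i, lam i ^ ((n:ℝ)⁻¹) ≤ (6:ℝ) := by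
    have hw : ∑ _i : Fin n, (n:ℝ)⁻¹ = 1 := by
      simp [Finset.sum_const]
      field_simp
    have h2 := Real.geom_mean_le_arith_mean_weighted Finset.univ
      (fun _ => (n:ℝ)⁻¹) lam (fun i _ => by positivity) hw (fun i _ => hlamnn i)
    calc ∏ i, lam i ^ ((n:ℝ)⁻¹) ≤ ∑ i, (n:ℝ)⁻¹ * lam i := h2
      _ = (n:ℝ)⁻¹ * ∑ i, lam i := by rw [Finset.mul_sum]
      _ ≤ (n:ℝ)⁻¹ * (6 * n) := by
          apply mul_le_mul_of_nonneg_left htr6 (by positivity)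
      _ = 6 := by field_simp
  have hprod6 : ∏ i, lam i ≤ 6 ^ n := by
    have hG : (0:ℝ) ≤ ∏ i, lam i ^ ((n:ℝ)⁻¹) :=
      Finset.prod_nonneg (fun i _ => Real.rpow_nonneg (hlamnn i) _)
    have := pow_le_pow_left₀ hG hamgm n
    calc ∏ i, lam i = (∏ i, lam i ^ ((n:ℝ)⁻¹)) ^ n := by
          rw [← Finset.prod_pow]
          apply Finset.prod_congr rfl
          intro i _
          rw [← Real.rpow_natCast (lam i ^ ((n:ℝ)⁻¹)) n, ← Real.rpow_mul (hlamnn i)]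
          rw [inv_mul_cancel₀ (ne_of_gt hnpos), Real.rpow_one]
      _ ≤ 6 ^ n := this
  have hdetsq : R.det ^ 2 ≤ 6 ^ n := by
    have : P.det = R.det ^ 2 := by
      rw [hPdef, Matrix.det_mul, Matrix.det_conjTranspose, star_trivial, sq]
    rw [← this, hdetP]; exact hprod6
  have h6 : ((Real.sqrt 6) ^ n) ^ 2 = 6 ^ n := by
    rw [← pow_mul, mul_comm n 2, pow_mul, Real.sq_sqrt (by norm_num : (6:ℝ) ≥ 0)]
  calc |R.det| = Real.sqrt (R.det ^ 2) := (Real.sqrt_sq_eq_abs _).symm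
    _ ≤ Real.sqrt (((Real.sqrt 6) ^ n) ^ 2) := by
        apply Real.sqrt_le_sqrt; rw [h6]; exact hdetsq
    _ = (Real.sqrt 6) ^ n := Real.sqrt_sq (by positivity)


set_option maxHeartbeats 800000
set_option synthInstance.maxHeartbeats 200000

/-- Let `A` be an `n × n` rational matrix (`n ≥ 1`) with zero diagonal, entries in
`{0, 1/2}`, at most two nonzero entries per row, and `I - A` invertible.  Let `b` be a
vector whose entries have the form `c / (2q)` with `c ∈ ℤ` and `q ∈ ℕ`, `q > 0`.  Then
every entry of the unique solution `z` of `z = A z + b` is a fraction `a / d` of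
integers with `0 < d ≤ 6^(n/2) · q = (√6)^n · q`. -/
theorem stmt_5 (n : ℕ) (hn : 1 ≤ n) (q : ℕ) (hq : 0 < q)
    (A : Matrix (Fin n) (Fin n) ℚ)
    (hdiag : ∀ i, A i i = 0)
    (hent : ∀ i j, A i j = 0 ∨ A i j = 1 / 2)
    (hrow : ∀ i, {j | A i j ≠ 0}.ncard ≤ 2)
    (hinv : IsUnit (1 - A))
    (b z : Fin n → ℚ)
    (hb : ∀ i, ∃ c : ℤ, b i = (c : ℚ) / (2 * q))
    (hz : z = A.mulVec z + b) :
    ∀ i, ∃ a d : ℤ, 0 < d ∧ (d : ℝ) ≤ Real.sqrt 6 ^ n * q ∧ z i = (a : ℚ) / d := by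
  classical
  choose c hc using hb
  set N : Matrix (Fin n) (Fin n) ℤ :=
    Matrix.of (fun i j => if i = j then 2 else if A i j = 0 then 0 else -1) with hNdef
  have hqQ : ((q:ℚ)) ≠ 0 := by positivity
  have hNQ : N.map (Int.cast : ℤ → ℚ) = (2:ℚ) • (1 - A) := by
    ext i j
    by_cases h : i = j
    · subst h
      simp [hNdef, Matrix.one_apply, hdiag i]
    · rcases hent i j with h0 | h0 <;>
        simp [hNdef, Matrix.one_apply, h, h0] <;> norm_num
  have hdet1A : (1 - A).det ≠ 0 := by
    have := (Matrix.isUnit_iff_isUnit_det _).mp hinv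
    exact this.ne_zero
  have hdetN : ((N.det : ℚ)) = 2 ^ n * (1 - A).det := by
    have h := RingHom.map_det (Int.castRingHom ℚ) N
    simp only [RingHom.mapMatrix_apply, Int.coe_castRingHom] at h
    rw [h, hNQ, Matrix.det_smul, Fintype.card_fin]
  have hdetN0 : N.det ≠ 0 := by
    intro h
    rw [h] at hdetN
    simp only [Int.cast_zero] at hdetN
    have h2 : (2:ℚ) ^ n ≠ 0 := by positivity
    exact hdet1A ((mul_eq_zero.mp hdetN.symm).resolve_left h2)
  have hb' : z - A.mulVec z = b := by
    nth_rewrite 1 [hz]; exact add_sub_cancel_left _ _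
  have hb2 : (1 - A).mulVec z = b := by
    rw [Matrix.sub_mulVec, Matrix.one_mulVec, hb']
  have hMmul : (N.map (Int.cast : ℤ → ℚ)).mulVec ((q:ℚ) • z) = fun j => (c j : ℚ) := by
    funext j
    rw [hNQ, Matrix.smul_mulVec, Matrix.mulVec_smul, hb2]
    simp only [Pi.smul_apply, smul_eq_mul]
    rw [hc j]
    field_simp
  have key : ∀ k, (N.det : ℚ) * ((q:ℚ) * z k) = ((N.adjugate.mulVec c) k : ℚ) := by
    intro k
    have h1 : (N.map (Int.cast : ℤ → ℚ)).adjugate.mulVec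
        ((N.map (Int.cast : ℤ → ℚ)).mulVec ((q:ℚ) • z)) =
        (N.map (Int.cast : ℤ → ℚ)).det • ((q:ℚ) • z) := by
      rw [Matrix.mulVec_mulVec, Matrix.adjugate_mul, Matrix.smul_mulVec,
        Matrix.one_mulVec]
    rw [hMmul] at h1
    have h2 : (N.map (Int.cast : ℤ → ℚ)).adjugate = N.adjugate.map (Int.cast : ℤ → ℚ) := by
      have := RingHom.map_adjugate (Int.castRingHom ℚ) N
      simpa [RingHom.mapMatrix_apply] using this.symm
    have h3 : ((N.map (Int.cast : ℤ → ℚ)).adjugate.mulVec (fun j => (c j : ℚ))) k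
        = ((N.adjugate.mulVec c) k : ℚ) := by
      rw [h2]
      simp [Matrix.mulVec, dotProduct]
    have h4 : (N.map (Int.cast : ℤ → ℚ)).det = (N.det : ℚ) := by
      have h := RingHom.map_det (Int.castRingHom ℚ) N
      simp only [RingHom.mapMatrix_apply, Int.coe_castRingHom] at h
      exact h.symm
    have h5 := congrFun h1 k
    simp only [Pi.smul_apply, smul_eq_mul, h4] at h5
    rw [← h3, h5]
  -- determinant bound over ℝ
  set R : Matrix (Fin n) (Fin n) ℝ := N.map (Int.cast : ℤ → ℝ) with hRdef
  have hrowR : ∀ i, ∑ j, (R i j) ^ 2 ≤ 6 := by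
    intro i
    have hterm : ∀ j, (R i j) ^ 2 =
        (if i = j then (4:ℝ) else 0) + (if i ≠ j ∧ A i j ≠ 0 then 1 else 0) := by
      intro j
      by_cases h : i = j
      · subst h; simp [hRdef, hNdef]; norm_num
      · by_cases h2 : A i j = 0 <;> simp [hRdef, hNdef, h, h2] <;> norm_num
    have hsub : (Finset.univ.filter (fun j => i ≠ j ∧ A i j ≠ 0)).card ≤
        (Finset.univ.filter (fun j => A i j ≠ 0)).card := by
      apply Finset.card_le_card
      intro j hj
      simp only [Finset.mem_filter] at hj ⊢
      exact ⟨hj.1, hj.2.2⟩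
    have hcard : (Finset.univ.filter (fun j => A i j ≠ 0)).card ≤ 2 := by
      have h := hrow i
      rwa [show {j | A i j ≠ 0} = ↑(Finset.univ.filter (fun j => A i j ≠ 0)) by
        ext j; simp, Set.ncard_coe_finset] at h
    have h2 : ((Finset.univ.filter (fun j => i ≠ j ∧ A i j ≠ 0)).card : ℝ) ≤ 2 := by
      exact_mod_cast le_trans hsub hcard
    calc ∑ j, (R i j) ^ 2
        = ∑ j, ((if i = j then (4:ℝ) else 0) + (if i ≠ j ∧ A i j ≠ 0 then 1 else 0)) :=
          Finset.sum_congr rfl (fun j _ => hterm j)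
      _ = 4 + ((Finset.univ.filter (fun j => i ≠ j ∧ A i j ≠ 0)).card : ℝ) := by
          rw [Finset.sum_add_distrib, Finset.sum_ite_eq Finset.univ i (fun _ => (4:ℝ))]
          simp [Finset.sum_boole]
      _ ≤ 4 + 2 := by linarith
      _ = 6 := by norm_num
  have hdetRN : R.det = (N.det : ℝ) := by
    have h := RingHom.map_det (Int.castRingHom ℝ) N
    simp only [RingHom.mapMatrix_apply, Int.coe_castRingHom] at h
    exact h.symm
  have habs : |((N.det : ℝ))| ≤ Real.sqrt 6 ^ n := by
    rw [← hdetRN]; exact my_det_bound hn R hrowR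
  -- conclude
  intro i
  set a0 : ℤ := (N.adjugate.mulVec c) i with ha0
  set D : ℤ := N.det * q with hD
  have hq0 : (q:ℤ) ≠ 0 := by exact_mod_cast hq.ne'
  have hD0 : D ≠ 0 := mul_ne_zero hdetN0 hq0
  have hDQ : ((D:ℚ)) ≠ 0 := by exact_mod_cast hD0
  have hzi : z i = (a0 : ℚ) / (D : ℚ) := by
    rw [eq_div_iff hDQ]
    have h := key i
    rw [hD]
    push_cast
    push_cast at h
    nlinarith [h]
  have hDbound : (|D| : ℝ) ≤ Real.sqrt 6 ^ n * q := by
    have h1 : (|D| : ℝ) = |(N.det : ℝ)| * q := by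
      rw [hD]
      push_cast [abs_mul]
      simp
    rw [h1]
    exact mul_le_mul_of_nonneg_right habs (by positivity)
  rcases lt_or_gt_of_ne hD0 with hneg | hpos
  · refine ⟨-a0, -D, by omega, ?_, ?_⟩
    · have h6 : ((-D : ℤ) : ℝ) = |(D:ℝ)| := by
        rw [abs_of_neg (show (D:ℝ) < 0 by exact_mod_cast hneg)]
        push_cast
        ring
      rw [h6]; exact hDbound
    · rw [hzi]; push_cast; rw [neg_div_neg_eq]
  · refine ⟨a0, D, hpos, ?_, ?_⟩
    · have h6 : ((D : ℤ) : ℝ) = |(D:ℝ)| := by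
        rw [abs_of_pos (show (0:ℝ) < (D:ℝ) by exact_mod_cast hpos)]
      rw [h6]; exact hDbound
    · exact hzi
end
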